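/- Let λ₁, …, λ_S > 0, σ² > 0, p₀ > 0, and for each s set p_s = max(0, 1/p₀ − σ²/λ_s²). Let S̄ = #{s : p_s = 0}. Then Σ_{s=1}^{S} log₂(1 + (p_s/σ²)·λ_s²) ≤ S·log₂( (1/(S·p₀·σ²))·Σ_{s=1}^{S} λ_s² + S̄/S ). -/

import Mathlib

theorem stmt_10 (S : ℕ) (hS : 0 < S) (lam : Fin S → ℝ) (hlam : ∀ s, 0 < lam s)
    (σ2 p0 : ℝ) (hσ2 : 0 < σ2) (hp0 : 0 < p0)
    (p : Fin S → ℝ) (hp : ∀ s, p s = max 0 (1 / p0 - σ2 / lam s ^ 2))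
    (Sbar : ℕ) (hSbar : Sbar = (Finset.univ.filter fun s => p s = 0).card) :
    ∑ s, Real.logb 2 (1 + (p s / σ2) * lam s ^ 2) ≤
      S * Real.logb 2 ((1 / (S * p0 * σ2)) * ∑ s, lam s ^ 2 + (Sbar : ℝ) / S) := by
  have hlog2 : (0:ℝ) < Real.log 2 := Real.log_pos one_lt_two
  have hSpos : (0:ℝ) < (S:ℝ) := by exact_mod_cast hS
  set A : ℝ := 1 / (p0 * σ2) with hA
  have hA0 : 0 < A := by positivity
  set x : Fin S → ℝ := fun s => max 1 (A * lam s ^ 2) with hxdef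
  have hx1 : ∀ s, 1 ≤ x s := fun s => le_max_left _ _
  have hx0 : ∀ s, 0 < x s := fun s => lt_of_lt_of_le one_pos (hx1 s)
  -- rewrite each summand
  have hx : ∀ s, 1 + (p s / σ2) * lam s ^ 2 = x s := by
    intro s
    have hl2 : (0:ℝ) < lam s ^ 2 := pow_pos (hlam s) 2
    have hc : (0:ℝ) ≤ lam s ^ 2 / σ2 := by positivity
    have hkey : (1 / p0 - σ2 / lam s ^ 2) * (lam s ^ 2 / σ2) = A * lam s ^ 2 - 1 := by
      rw [hA]
      field_simp [(hlam s).ne']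
    rw [hp s]
    have : max 0 (1 / p0 - σ2 / lam s ^ 2) / σ2 * lam s ^ 2
        = max 0 (1 / p0 - σ2 / lam s ^ 2) * (lam s ^ 2 / σ2) := by ring
    rw [this, max_mul_of_nonneg _ _ hc, zero_mul, hkey]
    simp only [hxdef]
    rcases le_total (A * lam s ^ 2 - 1) 0 with h | h
    · rw [max_eq_left h, max_eq_left (show A * lam s ^ 2 ≤ 1 by linarith)]; ring
    · rw [max_eq_right h, max_eq_right (show (1:ℝ) ≤ A * lam s ^ 2 by linarith)]; ring
  -- p s = 0 ↔ x s = 1, and bound each x s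
  have hxb : ∀ s, x s ≤ A * lam s ^ 2 + (if p s = 0 then (1:ℝ) else 0) := by
    intro s
    rcases eq_or_ne (p s) 0 with h | h
    · simp only [h, if_pos rfl]
      have hAl : A * lam s ^ 2 ≤ 1 := by
        by_contra hcon
        push_neg at hcon
        have hl2 : (0:ℝ) < lam s ^ 2 := pow_pos (hlam s) 2
        have hkey : (1 / p0 - σ2 / lam s ^ 2) * (lam s ^ 2 / σ2) = A * lam s ^ 2 - 1 := by
          rw [hA]; field_simp [(hlam s).ne']
        have hpos : 0 < 1 / p0 - σ2 / lam s ^ 2 := by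
          nlinarith [div_pos hl2 hσ2]
        rw [hp s, max_eq_right hpos.le] at h
        linarith
      have hxs : x s = 1 := max_eq_left hAl
      rw [hxs]
      have h1 : (if True then (1:ℝ) else 0) = 1 := rfl
      rw [h1]
      nlinarith [hA0, sq_nonneg (lam s)]
    · simp only [if_neg h, add_zero]
      have hpos : 0 < 1 / p0 - σ2 / lam s ^ 2 := by
        rcases le_or_gt (1 / p0 - σ2 / lam s ^ 2) 0 with h' | h'
        · exact absurd (by rw [hp s, max_eq_left h']) h
        · exact h'
      have hl2 : (0:ℝ) < lam s ^ 2 := pow_pos (hlam s) 2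
      have hAl : 1 ≤ A * lam s ^ 2 := by
        have := mul_pos hpos (div_pos hl2 hσ2)
        have hkey : (1 / p0 - σ2 / lam s ^ 2) * (lam s ^ 2 / σ2) = A * lam s ^ 2 - 1 := by
          rw [hA]; field_simp [(hlam s).ne']
        linarith [hkey ▸ this]
      exact le_of_eq (max_eq_right hAl)
  -- sum bound
  have hsum : ∑ s, x s ≤ A * (∑ s, lam s ^ 2) + (Sbar : ℝ) := by
    calc ∑ s, x s ≤ ∑ s, (A * lam s ^ 2 + (if p s = 0 then (1:ℝ) else 0)) :=
          Finset.sum_le_sum fun s _ => hxb s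
      _ = A * (∑ s, lam s ^ 2) + (Sbar : ℝ) := by
          rw [Finset.sum_add_distrib, Finset.mul_sum, Finset.sum_boole, hSbar]
  set M : ℝ := (∑ s, x s) / S with hM
  have hM1 : 1 ≤ M := by
    rw [hM, le_div_iff₀ hSpos, one_mul]
    calc (S:ℝ) = ∑ _s : Fin S, (1:ℝ) := by simp
      _ ≤ ∑ s, x s := Finset.sum_le_sum fun s _ => hx1 s
  set R : ℝ := (1 / (S * p0 * σ2)) * (∑ s, lam s ^ 2) + (Sbar : ℝ) / S with hR
  have hMR : M ≤ R := by
    rw [hM, hR, div_le_iff₀ hSpos]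
    have h1 : (1 / ((S:ℝ) * p0 * σ2)) = A / S := by
      rw [hA]; field_simp
    rw [h1]
    have : (A / S * (∑ s, lam s ^ 2) + (Sbar : ℝ) / S) * S
        = A * (∑ s, lam s ^ 2) + (Sbar : ℝ) := by
      field_simp
    rw [this]
    exact hsum
  -- Jensen
  have hjensen : ∑ s, (1 / (S:ℝ)) * Real.log (x s) ≤ Real.log M := by
    have hconc : ConcaveOn ℝ (Set.Ioi (0:ℝ)) Real.log := strictConcaveOn_log_Ioi.concaveOn
    have := hconc.le_map_sum (t := Finset.univ) (w := fun _ : Fin S => 1 / (S:ℝ))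
      (p := x) (fun i _ => by positivity)
      (by simp [Finset.sum_const, Finset.card_univ]; field_simp)
      (fun i _ => Set.mem_Ioi.mpr (hx0 i))
    simpa [smul_eq_mul, hM, Finset.mul_sum, div_eq_mul_inv, mul_comm] using this
  have hlogsum : ∑ s, Real.log (x s) ≤ (S:ℝ) * Real.log M := by
    have := mul_le_mul_of_nonneg_left hjensen hSpos.le
    rw [Finset.mul_sum] at this
    calc ∑ s, Real.log (x s) = ∑ s, (S:ℝ) * ((1 / (S:ℝ)) * Real.log (x s)) := by
          apply Finset.sum_congr rfl
          intro s _
          field_simp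
      _ ≤ (S:ℝ) * Real.log M := this
  have hMpos : (0:ℝ) < M := lt_of_lt_of_le one_pos hM1
  have hlogMR : Real.log M ≤ Real.log R := Real.log_le_log hMpos hMR
  calc ∑ s, Real.logb 2 (1 + (p s / σ2) * lam s ^ 2)
      = ∑ s, Real.log (x s) / Real.log 2 := by
        apply Finset.sum_congr rfl
        intro s _
        rw [hx s, Real.logb]
    _ = (∑ s, Real.log (x s)) / Real.log 2 := by rw [Finset.sum_div]
    _ ≤ ((S:ℝ) * Real.log M) / Real.log 2 :=
        by gcongr
    _ ≤ ((S:ℝ) * Real.log R) / Real.log 2 := by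
        gcongr
    _ = (S:ℝ) * Real.logb 2 R := by rw [Real.logb]; ring
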